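/- Let h be a real random variable satisfying C₁ p^β ≤ E[|h|^p]^{1/p} ≤ C₂ p^β for all p ≥ 2, with β > 0 and 0 < C₁ ≤ C₂. Then there exist constants c₁, c₂ > 0 depending only on C₁, C₂, β such that c₁ e^{−t^{1/β}/c₁} ≤ P[|h| ≥ t] ≤ c₂ e^{−t^{1/β}/c₂} for all t ≥ 0. -/

import Mathlib

open Real MeasureTheory ProbabilityTheory

variable {Ω : Type} [MeasurableSpace Ω] {μ : Measure Ω} [IsProbabilityMeasure μ] {h : Ω → ℝ}

lemma aux_int (hm : Measurable h) {p C : ℝ} (hC : 0 < C) (hp : 0 < p)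
    (hlow : C ≤ (∫ ω, |h ω| ^ p ∂μ) ^ (1/p)) : Integrable (fun ω => |h ω| ^ p) μ := by
  by_contra hni
  rw [integral_undef hni, Real.zero_rpow (by positivity : (0:ℝ) < 1/p).ne'] at hlow
  linarith

lemma aux_meas (hm : Measurable h) (p : ℝ) : Measurable (fun ω => |h ω| ^ p) :=
  by fun_prop

lemma aux_pow {x a p : ℝ} (hx : 0 ≤ x) (hp : 0 < p) (hb : x ^ (1/p) ≤ a) : x ≤ a ^ p := by
  have := Real.rpow_le_rpow (Real.rpow_nonneg hx _) hb hp.le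
  rwa [← Real.rpow_mul hx, one_div, inv_mul_cancel₀ hp.ne', Real.rpow_one] at this

lemma aux_pow' {x a p : ℝ} (hx : 0 ≤ x) (ha : 0 ≤ a) (hp : 0 < p) (hb : a ≤ x ^ (1/p)) :
    a ^ p ≤ x := by
  have := Real.rpow_le_rpow ha hb hp.le
  rwa [← Real.rpow_mul hx, one_div, inv_mul_cancel₀ hp.ne', Real.rpow_one] at this

lemma aux_markov (hm : Measurable h) {p t : ℝ} (hp : 0 < p) (ht : 0 < t)
    (hint : Integrable (fun ω => |h ω| ^ p) μ) :
    (μ {ω | t ≤ |h ω|}).toReal ≤ (∫ ω, |h ω| ^ p ∂μ) / t ^ p := by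
  have hset : {ω | t ≤ |h ω|} = {ω | t ^ p ≤ |h ω| ^ p} := by
    ext ω
    simp only [Set.mem_setOf_eq]
    exact (Real.rpow_le_rpow_iff ht.le (abs_nonneg _) hp).symm
  have := mul_meas_ge_le_integral_of_nonneg
    (μ := μ) (f := fun ω => |h ω| ^ p)
    (ae_of_all _ fun ω => Real.rpow_nonneg (abs_nonneg _) _) hint (t ^ p)
  rw [← hset] at this
  rw [measureReal_def] at this
  rw [le_div_iff₀ (by positivity)]
  linarith

lemma aux_rpow_two {x p : ℝ} (hx : 0 ≤ x) : (x ^ p) ^ (2:ℕ) = x ^ (2 * p) := by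
  rw [← Real.rpow_natCast (x ^ p) 2, ← Real.rpow_mul hx]
  norm_num [mul_comm]

lemma aux_cs (hm : Measurable h) {p : ℝ} {s : Set Ω} (hs : MeasurableSet s)
    (hint2 : Integrable (fun ω => |h ω| ^ (2 * p)) μ) :
    ∫ ω in s, |h ω| ^ p ∂μ ≤
      (∫ ω, |h ω| ^ (2 * p) ∂μ) ^ (1/2 : ℝ) * ((μ s).toReal) ^ (1/2 : ℝ) := by
  have hmeas : Measurable (fun ω => |h ω| ^ p) := by fun_prop
  have hsq : ∀ ω, (fun ω => |h ω| ^ p) ω ^ (2:ℕ) = |h ω| ^ (2 * p) := fun ω =>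
    aux_rpow_two (abs_nonneg _)
  have hf : MemLp (fun ω => |h ω| ^ p) (ENNReal.ofReal 2) (μ.restrict s) := by
    rw [(by norm_num : ENNReal.ofReal 2 = 2)]
    refine (memLp_two_iff_integrable_sq hmeas.aestronglyMeasurable).2 ?_
    refine (Integrable.restrict ?_ (s := s))
    simpa only [hsq] using hint2
  have hg : MemLp (fun _ : Ω => (1:ℝ)) (ENNReal.ofReal 2) (μ.restrict s) :=
    memLp_const 1
  have hcs := MeasureTheory.integral_mul_norm_le_Lp_mul_Lq (μ := μ.restrict s)
    (Real.HolderConjugate.two_two : Real.HolderConjugate 2 2) hf hg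
  have e1 : ∀ ω, ‖|h ω| ^ p‖ * ‖(1:ℝ)‖ = |h ω| ^ p := by
    intro ω
    rw [norm_one, mul_one, Real.norm_eq_abs, abs_of_nonneg (Real.rpow_nonneg (abs_nonneg _) _)]
  have e1' : ∀ ω, ‖|h ω| ^ p‖ = |h ω| ^ p := fun ω => by
    rw [Real.norm_eq_abs, abs_of_nonneg (Real.rpow_nonneg (abs_nonneg _) _)]
  have e2 : ∀ ω, (|h ω| ^ p) ^ (2:ℝ) = |h ω| ^ (2 * p) := by
    intro ω
    rw [← Real.rpow_mul (abs_nonneg _)]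
    norm_num [mul_comm]
  simp only [e1, e1', e2, norm_one, Real.one_rpow, integral_const, smul_eq_mul, mul_one, measureReal_def] at hcs
  rw [Measure.restrict_apply_univ] at hcs
  refine hcs.trans ?_
  refine mul_le_mul_of_nonneg_right ?_ (Real.rpow_nonneg ENNReal.toReal_nonneg _)
  refine Real.rpow_le_rpow (integral_nonneg fun ω => Real.rpow_nonneg (abs_nonneg _) _) ?_
    (by norm_num)
  exact setIntegral_le_integral hint2
    (ae_of_all _ fun ω => by positivity)

lemma aux_pz (hm : Measurable h) {p t : ℝ} (hp : 0 < p) (ht : 0 ≤ t)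
    (hint : Integrable (fun ω => |h ω| ^ p) μ)
    (hint2 : Integrable (fun ω => |h ω| ^ (2 * p)) μ)
    (ht4 : t ^ p ≤ (∫ ω, |h ω| ^ p ∂μ) / 4) :
    (∫ ω, |h ω| ^ p ∂μ) ^ (2:ℕ) ≤
      4 * (∫ ω, |h ω| ^ (2 * p) ∂μ) * (μ {ω | t ≤ |h ω|}).toReal := by
  set s : Set Ω := {ω | t ≤ |h ω|} with hs_def
  have hs : MeasurableSet s := measurableSet_le measurable_const hm.abs
  set I := ∫ ω, |h ω| ^ p ∂μ with hI_def
  set J := ∫ ω, |h ω| ^ (2 * p) ∂μ with hJ_def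
  set P := (μ s).toReal with hP_def
  have hJ0 : 0 ≤ J := integral_nonneg fun ω => Real.rpow_nonneg (abs_nonneg _) _
  have hP0 : 0 ≤ P := ENNReal.toReal_nonneg
  have htp0 : 0 ≤ t ^ p := Real.rpow_nonneg ht _
  have hI0 : 0 ≤ I := by linarith
  have hsplit : (∫ ω in s, |h ω| ^ p ∂μ) + (∫ ω in sᶜ, |h ω| ^ p ∂μ) = I :=
    integral_add_compl hs hint
  have hcomp : ∫ ω in sᶜ, |h ω| ^ p ∂μ ≤ t ^ p := by
    have h1 : ∫ ω in sᶜ, |h ω| ^ p ∂μ ≤ ∫ _ in sᶜ, t ^ p ∂μ := by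
      refine setIntegral_mono_on hint.restrict (integrable_const _) hs.compl ?_
      intro ω hω
      have : ¬ t ≤ |h ω| := hω
      exact Real.rpow_le_rpow (abs_nonneg _) (le_of_not_ge this) hp.le
    have h2 : ∫ _ in sᶜ, t ^ p ∂μ = (μ sᶜ).toReal * t ^ p := by
      rw [setIntegral_const, smul_eq_mul, measureReal_def]
    have h3 : (μ sᶜ).toReal ≤ 1 := by
      have := ENNReal.toReal_mono ENNReal.one_ne_top (prob_le_one (μ := μ) (s := sᶜ))
      simpa using this
    calc ∫ ω in sᶜ, |h ω| ^ p ∂μ ≤ (μ sᶜ).toReal * t ^ p := by rw [← h2]; exact h1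
      _ ≤ 1 * t ^ p := mul_le_mul_of_nonneg_right h3 htp0
      _ = t ^ p := one_mul _
  have hcs : ∫ ω in s, |h ω| ^ p ∂μ ≤ J ^ (1/2 : ℝ) * P ^ (1/2 : ℝ) :=
    aux_cs hm hs hint2
  have h2 : I / 2 ≤ J ^ (1/2 : ℝ) * P ^ (1/2 : ℝ) := by linarith
  have h3 : (I/2) * (I/2) ≤ (J ^ (1/2:ℝ) * P ^ (1/2:ℝ)) * (J ^ (1/2:ℝ) * P ^ (1/2:ℝ)) :=
    mul_self_le_mul_self (by linarith) h2
  have h4 : (J ^ (1/2:ℝ) * P ^ (1/2:ℝ)) * (J ^ (1/2:ℝ) * P ^ (1/2:ℝ)) = J * P := by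
    rw [← Real.sqrt_eq_rpow, ← Real.sqrt_eq_rpow, mul_mul_mul_comm,
      Real.mul_self_sqrt hJ0, Real.mul_self_sqrt hP0]
  rw [h4] at h3
  nlinarith [h3]

lemma aux_upper {C₂ β : ℝ} (hC₂ : 0 < C₂) (hm : Measurable h)
    (H : ∀ q : ℝ, 2 ≤ q → (∫ ω, |h ω| ^ q ∂μ) ^ (1/q) ≤ C₂ * q ^ β)
    (HI : ∀ q : ℝ, 2 ≤ q → Integrable (fun ω => |h ω| ^ q) μ)
    {p t : ℝ} (hp : 2 ≤ p) (ht : 0 < t) :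
    (μ {ω | t ≤ |h ω|}).toReal ≤ (C₂ * p ^ β / t) ^ p := by
  have hp0 : (0:ℝ) < p := by linarith
  have hint := HI p hp
  have hI0 : 0 ≤ ∫ ω, |h ω| ^ p ∂μ :=
    integral_nonneg fun ω => Real.rpow_nonneg (abs_nonneg _) _
  have hIup : (∫ ω, |h ω| ^ p ∂μ) ≤ (C₂ * p ^ β) ^ p := aux_pow hI0 hp0 (H p hp)
  calc (μ {ω | t ≤ |h ω|}).toReal ≤ (∫ ω, |h ω| ^ p ∂μ) / t ^ p :=
        aux_markov hm hp0 ht hint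
    _ ≤ (C₂ * p ^ β) ^ p / t ^ p := by gcongr <;> positivity
    _ = (C₂ * p ^ β / t) ^ p := (Real.div_rpow (by positivity) ht.le _).symm

lemma aux_lower {C₁ C₂ β : ℝ} (hC₁ : 0 < C₁) (hC : C₁ ≤ C₂) (hβ : 0 < β)
    (hm : Measurable h)
    (H : ∀ q : ℝ, 2 ≤ q →
      C₁ * q ^ β ≤ (∫ ω, |h ω| ^ q ∂μ) ^ (1/q) ∧
        (∫ ω, |h ω| ^ q ∂μ) ^ (1/q) ≤ C₂ * q ^ β)
    {p t : ℝ} (hp : 2 ≤ p) (ht : 0 ≤ t)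
    (htp : t ≤ (1/2) * (C₁ * p ^ β)) :
    (1/4) * (C₁ / (C₂ * 2 ^ β)) ^ (2 * p) ≤ (μ {ω | t ≤ |h ω|}).toReal := by
  have hC₂ : (0:ℝ) < C₂ := lt_of_lt_of_le hC₁ hC
  have hp0 : (0:ℝ) < p := by linarith
  have hp2 : (2:ℝ) ≤ 2 * p := by linarith
  have hpb : (0:ℝ) < p ^ β := Real.rpow_pos_of_pos hp0 _
  have hint : Integrable (fun ω => |h ω| ^ p) μ :=
    aux_int hm (by positivity : (0:ℝ) < C₁ * p ^ β) hp0 (H p hp).1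
  have hint2 : Integrable (fun ω => |h ω| ^ (2 * p)) μ :=
    aux_int hm (by positivity : (0:ℝ) < C₁ * (2*p) ^ β) (by linarith) (H (2*p) hp2).1
  set I := ∫ ω, |h ω| ^ p ∂μ with hI_def
  set J := ∫ ω, |h ω| ^ (2 * p) ∂μ with hJ_def
  set P := (μ {ω | t ≤ |h ω|}).toReal with hP_def
  have hI0 : 0 ≤ I := integral_nonneg fun ω => Real.rpow_nonneg (abs_nonneg _) _
  have hJ0 : 0 ≤ J := integral_nonneg fun ω => Real.rpow_nonneg (abs_nonneg _) _
  have hP0 : 0 ≤ P := ENNReal.toReal_nonneg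
  have hIlow : (C₁ * p ^ β) ^ p ≤ I := aux_pow' hI0 (by positivity) hp0 (H p hp).1
  have hJup : J ≤ (C₂ * (2*p) ^ β) ^ (2*p) := aux_pow hJ0 (by linarith) (H (2*p) hp2).2
  -- t ^ p ≤ I / 4
  have hhalf' : ((1:ℝ)/2) ^ p ≤ 1/4 := by
    calc ((1:ℝ)/2) ^ p ≤ ((1:ℝ)/2) ^ (2:ℝ) :=
          Real.rpow_le_rpow_of_exponent_ge (by norm_num) (by norm_num) hp
      _ = 1/4 := by
          rw [show (2:ℝ) = ((2:ℕ) : ℝ) by norm_num, Real.rpow_natCast]; norm_num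
  have ht4 : t ^ p ≤ I / 4 := by
    have h1 : t ^ p ≤ ((1/2) * (C₁ * p ^ β)) ^ p := Real.rpow_le_rpow ht htp hp0.le
    have h2 : ((1/2) * (C₁ * p ^ β)) ^ p = (1/2 : ℝ) ^ p * (C₁ * p ^ β) ^ p :=
      Real.mul_rpow (by norm_num) (by positivity)
    have h3 : (1/2 : ℝ) ^ p * (C₁ * p ^ β) ^ p ≤ (1/4) * (C₁ * p ^ β) ^ p :=
      mul_le_mul_of_nonneg_right hhalf' (Real.rpow_nonneg (by positivity) _)
    nlinarith [Real.rpow_nonneg (show (0:ℝ) ≤ C₁ * p ^ β by positivity) p]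
  have hpz : I ^ (2:ℕ) ≤ 4 * J * P := aux_pz hm hp0 ht hint hint2 ht4
  -- rewrite (C₁ p^β)^{2p} as r^{2p} * X
  set r : ℝ := C₁ / (C₂ * 2 ^ β) with hr_def
  have h2β : (0:ℝ) < (2:ℝ) ^ β := Real.rpow_pos_of_pos (by norm_num) _
  have hr0 : 0 < r := by positivity
  set X : ℝ := (C₂ * (2*p) ^ β) ^ (2*p) with hX_def
  have hX0 : 0 < X := Real.rpow_pos_of_pos (by positivity) _
  have hkey : C₁ * p ^ β = r * (C₂ * (2*p) ^ β) := by
    rw [hr_def, show (2*p) ^ β = (2:ℝ) ^ β * p ^ β from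
      Real.mul_rpow (by norm_num) hp0.le]
    field_simp
  have hIsq : (C₁ * p ^ β) ^ (2 * p) ≤ I ^ (2:ℕ) := by
    have := aux_rpow_two (x := C₁ * p ^ β) (p := p) (by positivity)
    rw [← this]
    exact pow_le_pow_left₀ (Real.rpow_nonneg (by positivity) _) hIlow 2
  have hfac : (C₁ * p ^ β) ^ (2 * p) = r ^ (2 * p) * X := by
    rw [hkey, Real.mul_rpow hr0.le (by positivity)]
  have hchain : r ^ (2*p) * X ≤ 4 * X * P := by
    calc r ^ (2*p) * X = (C₁ * p ^ β) ^ (2*p) := hfac.symm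
      _ ≤ I ^ (2:ℕ) := hIsq
      _ ≤ 4 * J * P := hpz
      _ ≤ 4 * X * P := by nlinarith
  have hfin : r ^ (2*p) ≤ 4 * P := by
    have h' : r ^ (2*p) * X ≤ (4 * P) * X := by nlinarith
    exact (mul_le_mul_iff_left₀ hX0).mp h'
  linarith


set_option maxHeartbeats 2000000 in
/-- Tail bounds from moment growth: if `C₁ p^β ≤ E[|h|^p]^{1/p} ≤ C₂ p^β` for all
`p ≥ 2`, then there are constants `c₁, c₂ > 0` depending only on `C₁, C₂, β` with
`c₁ e^{-t^{1/β}/c₁} ≤ P[|h| ≥ t] ≤ c₂ e^{-t^{1/β}/c₂}` for all `t ≥ 0`. -/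
theorem stmt11 (C₁ C₂ β : ℝ) (hC₁ : 0 < C₁) (hC : C₁ ≤ C₂) (hβ : 0 < β) :
    ∃ c₁ c₂ : ℝ, 0 < c₁ ∧ 0 < c₂ ∧
      ∀ (Ω : Type) (_ : MeasurableSpace Ω) (μ : Measure Ω), IsProbabilityMeasure μ →
      ∀ h : Ω → ℝ, Measurable h →
      (∀ p : ℝ, 2 ≤ p →
        C₁ * p ^ β ≤ (∫ ω, |h ω| ^ p ∂μ) ^ (1 / p) ∧
          (∫ ω, |h ω| ^ p ∂μ) ^ (1 / p) ≤ C₂ * p ^ β) →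
      ∀ t : ℝ, 0 ≤ t →
        c₁ * Real.exp (-(t ^ (1 / β)) / c₁) ≤ (μ {ω | t ≤ |h ω|}).toReal ∧
          (μ {ω | t ≤ |h ω|}).toReal ≤ c₂ * Real.exp (-(t ^ (1 / β)) / c₂) := by
  have hC₂ : (0:ℝ) < C₂ := lt_of_lt_of_le hC₁ hC
  have h2β : (0:ℝ) < (2:ℝ) ^ β := Real.rpow_pos_of_pos (by norm_num) _
  have h2β1 : (1:ℝ) ≤ (2:ℝ) ^ β := Real.one_le_rpow (by norm_num) hβ.le
  set r : ℝ := C₁ / (C₂ * 2 ^ β) with hr_def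
  have hr0 : 0 < r := by positivity
  have hr1 : r ≤ 1 := by
    rw [hr_def, div_le_one (by positivity)]
    nlinarith
  set L : ℝ := -Real.log r with hL_def
  have hL0 : 0 ≤ L := by
    rw [hL_def, neg_nonneg]
    exact Real.log_nonpos hr0.le hr1
  set K : ℝ := (2/C₁) ^ (1/β) with hK_def
  have hK0 : 0 < K := Real.rpow_pos_of_pos (by positivity) _
  set c₁ : ℝ := min ((1/4) * Real.exp (-(4*L))) (1/(2*L*K+1)) with hc₁_def
  have hc₁0 : 0 < c₁ := lt_min (by positivity) (by positivity)
  set T₀ : ℝ := Real.exp 1 * C₂ * 2 ^ β with hT₀_def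
  have hT₀0 : 0 < T₀ := by positivity
  set a : ℝ := (Real.exp 1 * C₂) ^ (1/β) with ha_def
  have ha0 : 0 < a := Real.rpow_pos_of_pos (by positivity) _
  set c₂ : ℝ := max a (Real.exp (T₀ ^ (1/β))) with hc₂_def
  have hc₂0 : 0 < c₂ := lt_of_lt_of_le ha0 (le_max_left _ _)
  have hc₂1 : 1 ≤ c₂ :=
    le_trans (Real.one_le_exp (Real.rpow_nonneg hT₀0.le _)) (le_max_right _ _)
  refine ⟨c₁, c₂, hc₁0, hc₂0, ?_⟩
  intro Ω _ μ hprob h hm H t ht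
  have HI : ∀ q : ℝ, 2 ≤ q → Integrable (fun ω => |h ω| ^ q) μ := fun q hq =>
    aux_int hm (show (0:ℝ) < C₁ * q ^ β by
      have : (0:ℝ) < q := by linarith
      positivity) (by linarith) (H q hq).1
  set s : ℝ := t ^ (1/β) with hs_def
  have hs0 : 0 ≤ s := Real.rpow_nonneg ht _
  constructor
  · -- lower tail
    set p : ℝ := max 2 ((2*t/C₁) ^ (1/β)) with hp_def
    have hp : (2:ℝ) ≤ p := le_max_left _ _
    have hp0 : (0:ℝ) < p := by linarith
    have htp : t ≤ (1/2) * (C₁ * p ^ β) := by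
      have h1 : (2*t/C₁) ^ (1/β) ≤ p := le_max_right _ _
      have h2 : 2*t/C₁ ≤ p ^ β := by
        have := Real.rpow_le_rpow (Real.rpow_nonneg (by positivity) _) h1 hβ.le
        rwa [← Real.rpow_mul (by positivity : (0:ℝ) ≤ 2*t/C₁), one_div,
          inv_mul_cancel₀ hβ.ne', Real.rpow_one] at this
      rw [div_le_iff₀ hC₁] at h2
      linarith
    have hlow := aux_lower hC₁ hC hβ hm H hp ht htp
    -- r ^ (2p) = exp (-(2p) * L)
    have hrp : r ^ (2*p) = Real.exp (-(2*p*L)) := by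
      rw [Real.rpow_def_of_pos hr0, hL_def]
      ring_nf
    have hpK : p ≤ 2 + K * s := by
      refine max_le (by nlinarith [mul_nonneg hK0.le hs0]) ?_
      have : (2*t/C₁ : ℝ) = (2/C₁) * t := by ring
      rw [this, Real.mul_rpow (by positivity) ht, ← hK_def, ← hs_def]
      nlinarith
    have hexp : Real.exp (-(4*L) + -(2*L*K*s)) ≤ Real.exp (-(2*p*L)) := by
      apply Real.exp_le_exp.mpr
      have h' : L * p ≤ L * (2 + K*s) := mul_le_mul_of_nonneg_left hpK hL0
      nlinarith [h']
    have hc₁A : c₁ ≤ (1/4) * Real.exp (-(4*L)) := min_le_left _ _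
    have hc₁B : 2*L*K ≤ 1/c₁ := by
      have hb : (0:ℝ) < 2*L*K+1 := by positivity
      have : c₁ ≤ 1/(2*L*K+1) := min_le_right _ _
      have h1 : 1/(1/(2*L*K+1)) ≤ 1/c₁ := one_div_le_one_div_of_le hc₁0 this
      rw [one_div_one_div] at h1
      linarith
    have hexp2 : Real.exp (-s/c₁) ≤ Real.exp (-(2*L*K*s)) := by
      apply Real.exp_le_exp.mpr
      rw [neg_div, neg_le_neg_iff]
      rw [div_eq_mul_inv, ← one_div]
      have h' : s * (2*L*K) ≤ s * (1/c₁) := mul_le_mul_of_nonneg_left hc₁B hs0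
      linarith [h']
    calc c₁ * Real.exp (-s/c₁)
        ≤ ((1/4) * Real.exp (-(4*L))) * Real.exp (-(2*L*K*s)) := by
          refine mul_le_mul hc₁A hexp2 (Real.exp_pos _).le (by positivity)
      _ = (1/4) * Real.exp (-(4*L) + -(2*L*K*s)) := by rw [Real.exp_add]; ring
      _ ≤ (1/4) * Real.exp (-(2*p*L)) := by linarith [hexp]
      _ = (1/4) * r ^ (2*p) := by rw [hrp]
      _ ≤ (μ {ω | t ≤ |h ω|}).toReal := hlow
  · -- upper tail
    have hP1 : (μ {ω | t ≤ |h ω|}).toReal ≤ 1 := by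
      have := ENNReal.toReal_mono ENNReal.one_ne_top (prob_le_one (μ := μ) (s := {ω | t ≤ |h ω|}))
      simpa using this
    rcases le_or_gt t T₀ with hcase | hcase
    · -- small t
      have hsT : s ≤ T₀ ^ (1/β) := Real.rpow_le_rpow ht hcase (by positivity)
      have h1 : Real.exp (-s) ≤ Real.exp (-s/c₂) := by
        apply Real.exp_le_exp.mpr
        rw [neg_div, neg_le_neg_iff]
        calc s/c₂ ≤ s/1 := by gcongr
          _ = s := div_one s
      have h2 : Real.exp (T₀ ^ (1/β)) ≤ c₂ := le_max_right _ _
      calc (μ {ω | t ≤ |h ω|}).toReal ≤ 1 := hP1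
        _ = Real.exp (T₀ ^ (1/β)) * Real.exp (-(T₀ ^ (1/β))) := by
            rw [← Real.exp_add]; simp
        _ ≤ Real.exp (T₀ ^ (1/β)) * Real.exp (-s) := by
            refine mul_le_mul_of_nonneg_left ?_ (Real.exp_pos _).le
            exact Real.exp_le_exp.mpr (by linarith)
        _ ≤ c₂ * Real.exp (-s/c₂) :=
            mul_le_mul h2 h1 (Real.exp_pos _).le hc₂0.le
    · -- large t
      have ht0 : (0:ℝ) < t := lt_trans hT₀0 hcase
      set p : ℝ := (t/(Real.exp 1 * C₂)) ^ (1/β) with hp_def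
      have heC : (0:ℝ) < Real.exp 1 * C₂ := by positivity
      have hbase : (2:ℝ) ^ β ≤ t/(Real.exp 1 * C₂) := by
        rw [le_div_iff₀ heC]
        calc (2:ℝ) ^ β * (Real.exp 1 * C₂) = T₀ := by rw [hT₀_def]; ring
          _ ≤ t := hcase.le
      have hp : (2:ℝ) ≤ p := by
        have := Real.rpow_le_rpow h2β.le hbase (by positivity : (0:ℝ) ≤ 1/β)
        rwa [← Real.rpow_mul (by norm_num : (0:ℝ) ≤ 2), mul_one_div,
          div_self hβ.ne', Real.rpow_one] at this
      have hpβ : p ^ β = t/(Real.exp 1 * C₂) := by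
        rw [hp_def, ← Real.rpow_mul (by positivity), one_div,
          inv_mul_cancel₀ hβ.ne', Real.rpow_one]
      have hmarkov := aux_upper hC₂ hm (fun q hq => (H q hq).2) HI hp ht0
      have hval : C₂ * p ^ β / t = 1/Real.exp 1 := by
        rw [hpβ]
        field_simp
      have hps : p = s/a := by
        rw [hp_def, Real.div_rpow ht heC.le, ← hs_def, ← ha_def]
      have hPexp : (μ {ω | t ≤ |h ω|}).toReal ≤ Real.exp (-(s/a)) := by
        rw [hval] at hmarkov
        calc (μ {ω | t ≤ |h ω|}).toReal ≤ (1/Real.exp 1) ^ p := hmarkov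
          _ = Real.exp (-p) := by
              rw [one_div, Real.inv_rpow (Real.exp_pos 1).le, Real.exp_one_rpow,
                Real.exp_neg]
          _ = Real.exp (-(s/a)) := by rw [hps]
      calc (μ {ω | t ≤ |h ω|}).toReal ≤ Real.exp (-(s/a)) := hPexp
        _ ≤ Real.exp (-s/c₂) := by
            apply Real.exp_le_exp.mpr
            rw [neg_div, neg_le_neg_iff]
            have hac : a ≤ c₂ := le_max_left _ _
            gcongr
        _ ≤ c₂ * Real.exp (-s/c₂) := by nlinarith [Real.exp_pos (-s/c₂)]
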